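/- Let G be a GP4-graph constructed from a connected graph H with n vertices. If G has a paired dominating set of cardinality at most 2n + k (with k ≤ n), then H has a paired dominating set of cardinality at most k. -/
import Mathlib


open SimpleGraph Finset

/-- `D` is a dominating set of `G`. -/
def Dominating {V : Type*} (G : SimpleGraph V) (D : Finset V) : Prop :=
  ∀ v : V, ∃ u ∈ D, u = v ∨ G.Adj u v

/-- `D` is a semipaired dominating set of `G`: a dominating set whose vertices can be
partitioned into pairs (via a fixed-point-free involution) at distance at most 2. -/
def SemiPairedDom {V : Type*} (G : SimpleGraph V) (D : Finset V) : Prop :=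
  Dominating G D ∧ ∃ f : V → V,
    (∀ u ∈ D, f u ∈ D) ∧ (∀ u ∈ D, f (f u) = u) ∧ (∀ u ∈ D, f u ≠ u) ∧
    (∀ u ∈ D, G.Adj u (f u) ∨ ∃ w, G.Adj u w ∧ G.Adj w (f u))

/-- `D` is a paired dominating set of `G`: a dominating set whose induced subgraph has a
perfect matching (encoded by a fixed-point-free involution pairing adjacent vertices). -/
def PairedDom {V : Type*} (G : SimpleGraph V) (D : Finset V) : Prop :=
  Dominating G D ∧ ∃ f : V → V,
    (∀ u ∈ D, f u ∈ D) ∧ (∀ u ∈ D, f (f u) = u) ∧ (∀ u ∈ D, f u ≠ u) ∧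
    (∀ u ∈ D, G.Adj u (f u))

/-- The domination number. -/
noncomputable def domNum (V : Type*) [Fintype V] (G : SimpleGraph V) : ℕ :=
  sInf {k : ℕ | ∃ D : Finset V, Dominating G D ∧ D.card = k}

/-- The semipaired domination number. -/
noncomputable def semiPairedDomNum (V : Type*) [Fintype V] (G : SimpleGraph V) : ℕ :=
  sInf {k : ℕ | ∃ D : Finset V, SemiPairedDom G D ∧ D.card = k}

/-- The paired domination number. -/
noncomputable def pairedDomNum (V : Type*) [Fintype V] (G : SimpleGraph V) : ℕ :=
  sInf {k : ℕ | ∃ D : Finset V, PairedDom G D ∧ D.card = k}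

/-- The GP4-graph obtained from `H` by attaching to each vertex `a` a path
`a – w_a – x_a – y_a – z_a`, where `w_a, x_a, y_a, z_a` are the vertices
`Sum.inr (a, 0), …, Sum.inr (a, 3)`. -/
def GP4 {α : Type*} (H : SimpleGraph α) : SimpleGraph (α ⊕ α × Fin 4) :=
  SimpleGraph.fromRel (fun u v =>
    (∃ a b, u = Sum.inl a ∧ v = Sum.inl b ∧ H.Adj a b) ∨
    (∃ a, u = Sum.inl a ∧ v = Sum.inr (a, 0)) ∨
    (∃ (a : α) (j k : Fin 4), u = Sum.inr (a, j) ∧ v = Sum.inr (a, k) ∧ (k : ℕ) = (j : ℕ) + 1))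

section Aux
variable {α : Type*} {H : SimpleGraph α}

lemma gp4_ll {a b : α} : (GP4 H).Adj (Sum.inl a) (Sum.inl b) ↔ H.Adj a b := by
  simp only [GP4, SimpleGraph.fromRel_adj]
  constructor
  · rintro ⟨hne, h | h⟩ <;> rcases h with (⟨a',b',h1,h2,h3⟩|⟨a',h1,h2⟩|⟨a',j,k,h1,h2,h3⟩) <;>
      simp_all
    exact h3.symm
  · intro h
    exact ⟨by simpa using h.ne, Or.inl (Or.inl ⟨a, b, rfl, rfl, h⟩)⟩

lemma gp4_lr {a b : α} {j : Fin 4} :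
    (GP4 H).Adj (Sum.inl a) (Sum.inr (b, j)) ↔ b = a ∧ j = 0 := by
  simp only [GP4, SimpleGraph.fromRel_adj]
  constructor
  · rintro ⟨hne, h | h⟩ <;> rcases h with (⟨a',b',h1,h2,h3⟩|⟨a',h1,h2⟩|⟨a',j',k,h1,h2,h3⟩) <;>
      simp_all
  · rintro ⟨rfl, rfl⟩
    exact ⟨by simp, Or.inl (Or.inr (Or.inl ⟨_, rfl, rfl⟩))⟩

lemma gp4_rr {a b : α} {i j : Fin 4} :
    (GP4 H).Adj (Sum.inr (a, i)) (Sum.inr (b, j)) ↔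
      b = a ∧ ((j : ℕ) = (i : ℕ) + 1 ∨ (i : ℕ) = (j : ℕ) + 1) := by
  simp only [GP4, SimpleGraph.fromRel_adj]
  constructor
  · rintro ⟨hne, h | h⟩ <;> rcases h with (⟨a',b',h1,h2,h3⟩|⟨a',h1,h2⟩|⟨a',j',k,h1,h2,h3⟩) <;>
      simp_all
  · rintro ⟨rfl, h | h⟩
    · exact ⟨by simp [Fin.ext_iff]; omega, Or.inl (Or.inr (Or.inr ⟨_, i, j, rfl, rfl, h⟩))⟩
    · exact ⟨by simp [Fin.ext_iff]; omega, Or.inr (Or.inr (Or.inr ⟨_, j, i, rfl, rfl, h⟩))⟩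

lemma gp4_rl {a b : α} {j : Fin 4} :
    (GP4 H).Adj (Sum.inr (b, j)) (Sum.inl a) ↔ b = a ∧ j = 0 := by
  rw [SimpleGraph.adj_comm]; exact gp4_lr

lemma nbr_inl {a : α} {u : α ⊕ α × Fin 4} (h : (GP4 H).Adj u (Sum.inl a)) :
    (∃ b, u = Sum.inl b ∧ H.Adj b a) ∨ u = Sum.inr (a, 0) := by
  rcases u with b | ⟨b, j⟩
  · exact Or.inl ⟨b, rfl, gp4_ll.mp h⟩
  · obtain ⟨rfl, rfl⟩ := gp4_rl.mp h
    exact Or.inr rfl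

lemma nbr_tail {a : α} {i : Fin 4} {u : α ⊕ α × Fin 4} (h : (GP4 H).Adj u (Sum.inr (a, i))) :
    (u = Sum.inl a ∧ i = 0) ∨
      ∃ j : Fin 4, u = Sum.inr (a, j) ∧ ((i : ℕ) = (j : ℕ) + 1 ∨ (j : ℕ) = (i : ℕ) + 1) := by
  rcases u with b | ⟨b, j⟩
  · obtain ⟨rfl, rfl⟩ := gp4_lr.mp h
    exact Or.inl ⟨rfl, rfl⟩
  · obtain ⟨rfl, hj⟩ := (gp4_rr (H := H)).mp (h.symm)
    exact Or.inr ⟨j, rfl, by omega⟩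

lemma buildD [DecidableEq α] (H : SimpleGraph α) :
    ∀ m (P S : Finset α) (g : α → α),
      (S \ P).card ≤ m →
      (∀ u ∈ P, g u ∈ P) → (∀ u ∈ P, g (g u) = u) → (∀ u ∈ P, g u ≠ u) →
      (∀ u ∈ P, H.Adj u (g u)) →
      ∃ D : Finset α, ∃ f : α → α,
        P ⊆ D ∧
        (∀ s ∈ S, s ∈ D ∨ ∀ c, H.Adj c s → c ∈ D) ∧
        (∀ u ∈ D, f u ∈ D) ∧ (∀ u ∈ D, f (f u) = u) ∧ (∀ u ∈ D, f u ≠ u) ∧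
        (∀ u ∈ D, H.Adj u (f u)) ∧
        D.card ≤ P.card + 2 * (S \ P).card := by
  intro m
  induction m with
  | zero =>
    intro P S g hc h1 h2 h3 h4
    refine ⟨P, g, subset_rfl, ?_, h1, h2, h3, h4, by omega⟩
    intro s hs
    left
    have : S \ P = ∅ := Finset.card_eq_zero.mp (Nat.le_zero.mp hc)
    by_contra hsP
    exact absurd this (Finset.nonempty_iff_ne_empty.mp ⟨s, Finset.mem_sdiff.mpr ⟨hs, hsP⟩⟩)
  | succ m ih =>
    intro P S g hc h1 h2 h3 h4
    rcases Finset.eq_empty_or_nonempty (S \ P) with hemp | ⟨q, hq⟩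
    · refine ⟨P, g, subset_rfl, ?_, h1, h2, h3, h4, by omega⟩
      intro s hs
      left
      by_contra hsP
      exact absurd hemp (Finset.nonempty_iff_ne_empty.mp
        ⟨s, Finset.mem_sdiff.mpr ⟨hs, hsP⟩⟩)
    · obtain ⟨hqS, hqP⟩ := Finset.mem_sdiff.mp hq
      by_cases hN : ∀ c, H.Adj c q → c ∈ P
      · have hsub : (S.erase q) \ P ⊆ (S \ P).erase q := by
          intro v hv
          obtain ⟨hv1, hv2⟩ := Finset.mem_sdiff.mp hv
          exact Finset.mem_erase.mpr ⟨(Finset.mem_erase.mp hv1).1,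
            Finset.mem_sdiff.mpr ⟨(Finset.mem_erase.mp hv1).2, hv2⟩⟩
        have hcard : ((S.erase q) \ P).card ≤ m := by
          have := Finset.card_le_card hsub
          have := Finset.card_erase_of_mem hq
          omega
        obtain ⟨D, f, hPD, hS, hf1, hf2, hf3, hf4, hDc⟩ :=
          ih P (S.erase q) g hcard h1 h2 h3 h4
        refine ⟨D, f, hPD, ?_, hf1, hf2, hf3, hf4, ?_⟩
        · intro s hs
          by_cases hsq : s = q
          · subst hsq
            exact Or.inr fun c hc => hPD (hN c hc)
          · exact hS s (Finset.mem_erase.mpr ⟨hsq, hs⟩)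
        · have : ((S.erase q) \ P).card ≤ (S \ P).card := by
            have := Finset.card_le_card hsub
            have := Finset.card_erase_of_mem hq
            omega
          omega
      · push_neg at hN
        obtain ⟨c, hcq, hcP⟩ := hN
        have hqc : q ≠ c := fun h => H.irrefl (h ▸ hcq)
        set P' := insert q (insert c P) with hP'
        set g' : α → α := fun v => if v = q then c else if v = c then q else g v with hg'
        have hmemP' : ∀ u, u ∈ P' ↔ u = q ∨ u = c ∨ u ∈ P := by
          intro u; simp [hP']
        have hgP : ∀ u ∈ P, g' u = g u := by
          intro u hu
          have h1' : u ≠ q := fun h => hqP (h ▸ hu)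
          have h2' : u ≠ c := fun h => hcP (h ▸ hu)
          simp [hg', h1', h2']
        have hg'q : g' q = c := by simp [hg']
        have hg'c : g' c = q := by simp [hg', hqc.symm]
        have m1 : ∀ u ∈ P', g' u ∈ P' := by
          intro u hu
          rcases (hmemP' u).mp hu with rfl | rfl | hu
          · rw [hg'q]; exact (hmemP' c).mpr (Or.inr (Or.inl rfl))
          · rw [hg'c]; exact (hmemP' q).mpr (Or.inl rfl)
          · rw [hgP u hu]; exact (hmemP' _).mpr (Or.inr (Or.inr (h1 u hu)))
        have m2 : ∀ u ∈ P', g' (g' u) = u := by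
          intro u hu
          rcases (hmemP' u).mp hu with rfl | rfl | hu
          · rw [hg'q, hg'c]
          · rw [hg'c, hg'q]
          · rw [hgP u hu, hgP _ (h1 u hu)]; exact h2 u hu
        have m3 : ∀ u ∈ P', g' u ≠ u := by
          intro u hu
          rcases (hmemP' u).mp hu with rfl | rfl | hu
          · rw [hg'q]; exact hqc.symm
          · rw [hg'c]; exact hqc
          · rw [hgP u hu]; exact h3 u hu
        have m4 : ∀ u ∈ P', H.Adj u (g' u) := by
          intro u hu
          rcases (hmemP' u).mp hu with rfl | rfl | hu
          · rw [hg'q]; exact hcq.symm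
          · rw [hg'c]; exact hcq
          · rw [hgP u hu]; exact h4 u hu
        have hsub : S \ P' ⊆ (S \ P).erase q := by
          intro v hv
          obtain ⟨hv1, hv2⟩ := Finset.mem_sdiff.mp hv
          have hvP : v ∉ P := fun h => hv2 ((hmemP' v).mpr (Or.inr (Or.inr h)))
          have hvq : v ≠ q := fun h => hv2 ((hmemP' v).mpr (Or.inl h))
          exact Finset.mem_erase.mpr ⟨hvq, Finset.mem_sdiff.mpr ⟨hv1, hvP⟩⟩
        have hcard' : (S \ P').card ≤ m := by
          have := Finset.card_le_card hsub
          have := Finset.card_erase_of_mem hq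
          omega
        obtain ⟨D, f, hPD, hS, hf1, hf2, hf3, hf4, hDc⟩ :=
          ih P' S g' hcard' m1 m2 m3 m4
        have hP'c : P'.card = P.card + 2 := by
          rw [hP', Finset.card_insert_of_notMem, Finset.card_insert_of_notMem hcP]
          simp only [Finset.mem_insert]
          push_neg
          exact ⟨hqc, hqP⟩
        refine ⟨D, f, fun u hu => hPD ((hmemP' u).mpr (Or.inr (Or.inr hu))), hS,
          hf1, hf2, hf3, hf4, ?_⟩
        have h5 : (S \ P').card + 1 ≤ (S \ P).card := by
          have := Finset.card_le_card hsub
          have := Finset.card_erase_of_mem hq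
          have h6 : 1 ≤ (S \ P).card := Finset.card_pos.mpr ⟨q, hq⟩
          omega
        omega

end Aux

/-- If the GP4-graph of `H` (connected, no isolated vertices, `n` vertices)
has a paired dominating set of size at most `2n + k` with `k ≤ n`, then `H` has a paired
dominating set of size at most `k`. -/
theorem gp4_pairedDom_reverse {α : Type*} [Fintype α] [DecidableEq α]
    (H : SimpleGraph α) (hH : H.Connected) (hiso : ∀ v : α, ∃ u : α, H.Adj u v)
    (k : ℕ) (hk : k ≤ Fintype.card α)
    (h : ∃ D' : Finset (α ⊕ α × Fin 4),
      PairedDom (GP4 H) D' ∧ D'.card ≤ 2 * Fintype.card α + k) :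
    ∃ D : Finset α, PairedDom H D ∧ D.card ≤ k := by
  classical
  obtain ⟨D', ⟨hdom', f, hf1, hf2, hf3, hf4⟩, hcard⟩ := h
  set n := Fintype.card α with hn
  set A : Finset α := univ.filter (fun a => Sum.inl a ∈ D') with hA
  set B1 : Finset α := A.filter (fun a => f (Sum.inl a) = Sum.inr (a, 0)) with hB1
  set B2 : Finset α := univ.filter (fun v => v ∉ A ∧ ∀ b ∈ A, ¬ H.Adj b v) with hB2
  set P : Finset α := A \ B1 with hP
  set S : Finset α := A ∪ B2 with hS
  have hmemA : ∀ a, a ∈ A ↔ Sum.inl a ∈ D' := by intro a; simp [hA]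
  have hmemB1 : ∀ a, a ∈ B1 ↔ a ∈ A ∧ f (Sum.inl a) = Sum.inr (a, 0) := by
    intro a; simp [hB1]
  have hmemB2 : ∀ v, v ∈ B2 ↔ v ∉ A ∧ ∀ b ∈ A, ¬ H.Adj b v := by
    intro v; simp [hB2]
  -- the matching g on P
  have hPex : ∀ a ∈ P, ∃ b, f (Sum.inl a) = Sum.inl b := by
    intro a ha
    obtain ⟨haA, haB1⟩ := Finset.mem_sdiff.mp ha
    have hD : Sum.inl a ∈ D' := (hmemA a).mp haA
    have hadj := hf4 _ hD
    rcases hx : f (Sum.inl a) with b | ⟨b, j⟩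
    · exact ⟨b, rfl⟩
    · rw [hx] at hadj
      obtain ⟨hba, hj0⟩ := gp4_lr.mp hadj
      rw [hba, hj0] at hx
      exact absurd ((hmemB1 a).mpr ⟨haA, hx⟩) haB1
  set g : α → α := fun a => if hx : ∃ b, f (Sum.inl a) = Sum.inl b then hx.choose else a
    with hg
  have hgspec : ∀ a ∈ P, f (Sum.inl a) = Sum.inl (g a) := by
    intro a ha
    have hx := hPex a ha
    simp only [hg, dif_pos hx]
    exact hx.choose_spec
  have hgP : ∀ a ∈ P, g a ∈ P := by
    intro a ha
    obtain ⟨haA, _⟩ := Finset.mem_sdiff.mp ha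
    have hD : Sum.inl a ∈ D' := (hmemA a).mp haA
    have hspec := hgspec a ha
    have hgA : g a ∈ A := (hmemA _).mpr (hspec ▸ hf1 _ hD)
    refine Finset.mem_sdiff.mpr ⟨hgA, fun hB => ?_⟩
    have h2 : f (Sum.inl (g a)) = Sum.inl a := by rw [← hspec, hf2 _ hD]
    have := ((hmemB1 _).mp hB).2
    rw [h2] at this
    exact Sum.inl_ne_inr this
  have hgg : ∀ a ∈ P, g (g a) = a := by
    intro a ha
    have hD := (hmemA a).mp (Finset.mem_sdiff.mp ha).1
    have h2 : f (Sum.inl (g a)) = Sum.inl a := by rw [← hgspec a ha, hf2 _ hD]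
    have h3 := hgspec (g a) (hgP a ha)
    rw [h2] at h3
    exact (Sum.inl_injective h3).symm
  have hgne : ∀ a ∈ P, g a ≠ a := by
    intro a ha heq
    have hD := (hmemA a).mp (Finset.mem_sdiff.mp ha).1
    have := hgspec a ha
    rw [heq] at this
    exact hf3 _ hD this
  have hgadj : ∀ a ∈ P, H.Adj a (g a) := by
    intro a ha
    have hD := (hmemA a).mp (Finset.mem_sdiff.mp ha).1
    have hadj := hf4 _ hD
    rw [hgspec a ha] at hadj
    exact gp4_ll.mp hadj
  -- S dominates H
  have hdomS : Dominating H S := by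
    intro v
    by_cases hv : v ∈ A
    · exact ⟨v, Finset.mem_union_left _ hv, Or.inl rfl⟩
    by_cases hb : ∃ b ∈ A, H.Adj b v
    · obtain ⟨b, hbA, hbv⟩ := hb
      exact ⟨b, Finset.mem_union_left _ hbA, Or.inr hbv⟩
    · push_neg at hb
      exact ⟨v, Finset.mem_union_right _ ((hmemB2 v).mpr ⟨hv, hb⟩), Or.inl rfl⟩
  have hB1A : B1 ⊆ A := Finset.filter_subset _ _
  have hB2A : ∀ v ∈ B2, v ∉ A := fun v hv => ((hmemB2 v).mp hv).1
  have hSP : S \ P = B1 ∪ B2 := by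
    ext v
    simp only [hS, hP, Finset.mem_sdiff, Finset.mem_union, not_and, not_not]
    constructor
    · rintro ⟨hv1 | hv2, himp⟩
      · exact Or.inl (himp hv1)
      · exact Or.inr hv2
    · rintro (hv | hv)
      · exact ⟨Or.inl (hB1A hv), fun _ => hv⟩
      · exact ⟨Or.inr hv, fun hA' => absurd hA' (hB2A v hv)⟩
  have hdisj : Disjoint B1 B2 := by
    rw [Finset.disjoint_left]
    exact fun v hv1 hv2 => (hB2A v hv2) (hB1A hv1)
  have hcardSP : (S \ P).card = B1.card + B2.card := by
    rw [hSP, Finset.card_union_of_disjoint hdisj]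
  have hPB1 : P.card + B1.card = A.card := Finset.card_sdiff_add_card_eq_card hB1A
  -- counting in D'
  set t : α → Finset (Fin 4) := fun a => univ.filter (fun j => Sum.inr (a, j) ∈ D') with ht
  have hmemt : ∀ a j, j ∈ t a ↔ Sum.inr (a, j) ∈ D' := by intro a j; simp [ht]
  -- base claim
  have hy2 : ∀ a : α, Sum.inr (a, (2 : Fin 4)) ∈ D' ∨ Sum.inr (a, (3 : Fin 4)) ∈ D' := by
    intro a
    obtain ⟨u, huD, hu⟩ := hdom' (Sum.inr (a, 3))
    rcases hu with rfl | hadj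
    · exact Or.inr huD
    · rcases nbr_tail hadj with ⟨rfl, h0⟩ | ⟨j, rfl, hj⟩
      · exact absurd h0 (by decide)
      · have : j = 2 := by
          have hj4 : (j : ℕ) < 4 := j.isLt
          have : (j : ℕ) = 2 := by simpa using (by omega : (j : ℕ) = 2)
          exact Fin.ext (by simpa using this)
        subst this
        exact Or.inl huD
  have hbase : ∀ a : α, ∃ j1 j2 : Fin 4, j1 ≠ j2 ∧ j1 ≠ 0 ∧ j2 ≠ 0 ∧
      Sum.inr (a, j1) ∈ D' ∧ Sum.inr (a, j2) ∈ D' := by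
    intro a
    rcases hy2 a with hy | hz
    · -- y ∈ D'; partner of y is x or z
      have hadj := hf4 _ hy
      rcases nbr_tail hadj.symm with ⟨hfl, h0⟩ | ⟨j, hfj, hj⟩
      · exact absurd h0 (by decide)
      · have hjD : Sum.inr (a, j) ∈ D' := hfj ▸ hf1 _ hy
        have hj13 : (j : ℕ) = 1 ∨ (j : ℕ) = 3 := by
          have := j.isLt; omega
        refine ⟨2, j, ?_, by decide, ?_, hy, hjD⟩
        · intro hh; rw [← hh] at hj13; simp at hj13
        · intro hh; rw [hh] at hj13; simp at hj13
    · -- z ∈ D'; partner of z is y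
      have hadj := hf4 _ hz
      rcases nbr_tail hadj.symm with ⟨hfl, h0⟩ | ⟨j, hfj, hj⟩
      · exact absurd h0 (by decide)
      · have hjD : Sum.inr (a, j) ∈ D' := hfj ▸ hf1 _ hz
        have hj2 : j = 2 := by
          have := j.isLt
          have : (j : ℕ) = 2 := by omega
          exact Fin.ext (by simpa using this)
        subst hj2
        exact ⟨2, 3, by decide, by decide, by decide, hjD, hz⟩
  have hB1w : ∀ a ∈ B1, Sum.inr (a, (0 : Fin 4)) ∈ D' := by
    intro a ha
    obtain ⟨haA, hfa⟩ := (hmemB1 a).mp ha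
    have := hf1 _ ((hmemA a).mp haA)
    rwa [hfa] at this
  have hB2all : ∀ a ∈ B2, ∀ j : Fin 4, Sum.inr (a, j) ∈ D' := by
    intro a ha
    obtain ⟨haA, hnb⟩ := (hmemB2 a).mp ha
    have hanD : Sum.inl a ∉ D' := fun hD => haA ((hmemA a).mpr hD)
    -- w ∈ D'
    have hw : Sum.inr (a, (0 : Fin 4)) ∈ D' := by
      obtain ⟨u, huD, hu⟩ := hdom' (Sum.inl a)
      rcases hu with rfl | hadj
      · exact absurd huD hanD
      · rcases nbr_inl hadj with ⟨b, rfl, hba⟩ | rfl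
        · exact absurd hba (hnb b ((hmemA b).mpr huD))
        · exact huD
    -- x ∈ D' via partner of w
    have hx : Sum.inr (a, (1 : Fin 4)) ∈ D' ∧ f (Sum.inr (a, 0)) = Sum.inr (a, 1) := by
      have hadj := hf4 _ hw
      rcases nbr_tail hadj.symm with ⟨hfl, h0⟩ | ⟨j, hfj, hj⟩
      · exact absurd (hfl ▸ hf1 _ hw) hanD
      · have hj1 : j = 1 := by
          have := j.isLt
          have : (j : ℕ) = 1 := by omega
          exact Fin.ext (by simpa using this)
        subst hj1
        exact ⟨hfj ▸ hf1 _ hw, hfj⟩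
    -- z ∈ D'
    have hz : Sum.inr (a, (3 : Fin 4)) ∈ D' := by
      by_contra hzn
      have hy : Sum.inr (a, (2 : Fin 4)) ∈ D' := (hy2 a).resolve_right hzn
      -- partner of y is x or z; z ∉ D' so partner = x
      have hadj := hf4 _ hy
      rcases nbr_tail hadj.symm with ⟨hfl, h0⟩ | ⟨j, hfj, hj⟩
      · exact absurd h0 (by decide)
      · have hj13 : (j : ℕ) = 1 ∨ (j : ℕ) = 3 := by
          have := j.isLt; omega
        rcases hj13 with h1 | h3
        · have hj1 : j = 1 := Fin.ext (by simpa using h1)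
          subst hj1
          -- f y = x, so f x = y; but f w = x so f x = w
          have e1 : f (Sum.inr (a, (1 : Fin 4))) = Sum.inr (a, (2 : Fin 4)) := by
            rw [← hfj, hf2 _ hy]
          have e2 : f (Sum.inr (a, (1 : Fin 4))) = Sum.inr (a, (0 : Fin 4)) := by
            rw [← hx.2, hf2 _ hw]
          rw [e2] at e1
          simp [Fin.ext_iff] at e1
        · have hj3 : j = 3 := Fin.ext (by simpa using h3)
          subst hj3
          exact hzn (hfj ▸ hf1 _ hy)
    -- y ∈ D' via partner of z
    have hy : Sum.inr (a, (2 : Fin 4)) ∈ D' := by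
      have hadj := hf4 _ hz
      rcases nbr_tail hadj.symm with ⟨hfl, h0⟩ | ⟨j, hfj, hj⟩
      · exact absurd h0 (by decide)
      · have hj2 : j = 2 := by
          have := j.isLt
          have : (j : ℕ) = 2 := by omega
          exact Fin.ext (by simpa using this)
        subst hj2
        exact hfj ▸ hf1 _ hz
    intro j
    fin_cases j
    · exact hw
    · exact hx.1
    · exact hy
    · exact hz
  -- fiber cardinalities
  have hta : ∀ a : α,
      2 + (if a ∈ B1 then 1 else 0) + (if a ∈ B2 then 2 else 0) ≤ (t a).card := by
    intro a
    obtain ⟨j1, j2, hne, h10, h20, hj1, hj2⟩ := hbase a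
    by_cases hb2 : a ∈ B2
    · have h4 : t a = univ := by
        ext j
        simp only [Finset.mem_univ, iff_true]
        exact (hmemt a j).mpr (hB2all a hb2 j)
      have hnb1 : a ∉ B1 := fun hb1 => (hB2A a hb2) (hB1A hb1)
      simp only [hb2, hnb1, if_true, if_false]
      rw [h4]
      simp
    by_cases hb1 : a ∈ B1
    · have hsub : ({0, j1, j2} : Finset (Fin 4)) ⊆ t a := by
        intro j hj
        simp only [Finset.mem_insert, Finset.mem_singleton] at hj
        rcases hj with rfl | rfl | rfl
        · exact (hmemt a _).mpr (hB1w a hb1)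
        · exact (hmemt a _).mpr hj1
        · exact (hmemt a _).mpr hj2
      have hc3 : ({0, j1, j2} : Finset (Fin 4)).card = 3 := by
        rw [Finset.card_insert_of_notMem (by simp [Ne.symm h10, Ne.symm h20]),
          Finset.card_insert_of_notMem (by simp [hne]), Finset.card_singleton]
      have := Finset.card_le_card hsub
      simp only [hb1, hb2, if_true, if_false]
      omega
    · have hsub : ({j1, j2} : Finset (Fin 4)) ⊆ t a := by
        intro j hj
        simp only [Finset.mem_insert, Finset.mem_singleton] at hj
        rcases hj with rfl | rfl
        · exact (hmemt a _).mpr hj1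
        · exact (hmemt a _).mpr hj2
      have hc2 : ({j1, j2} : Finset (Fin 4)).card = 2 := by
        rw [Finset.card_insert_of_notMem (by simp [hne]), Finset.card_singleton]
      have := Finset.card_le_card hsub
      simp only [hb1, hb2, if_false]
      omega
  -- |D'| decomposition
  have hLcard : (D'.filter (fun u => u.isLeft)).card = A.card := by
    have himg : D'.filter (fun u => u.isLeft) = A.image Sum.inl := by
      ext u
      rcases u with b | ⟨b, j⟩
      · simp [hmemA b]
      · simp
    rw [himg, Finset.card_image_of_injective _ Sum.inl_injective]
  have hRcard : (D'.filter (fun u => ¬ u.isLeft)).card = ∑ a : α, (t a).card := by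
    rw [Finset.card_eq_sum_card_fiberwise
      (f := fun u => Sum.elim id Prod.fst u) (t := univ) (fun x _ => Finset.mem_univ _)]
    refine Finset.sum_congr rfl fun a _ => ?_
    have hfib : (D'.filter (fun u => ¬ u.isLeft)).filter
        (fun u => Sum.elim id Prod.fst u = a) = (t a).image (fun j => Sum.inr (a, j)) := by
      ext u
      rcases u with b | ⟨b, j⟩
      · simp
      · constructor
        · intro hu
          obtain ⟨hu1, hu2⟩ := Finset.mem_filter.mp hu
          obtain ⟨hD, -⟩ := Finset.mem_filter.mp hu1
          have hba : b = a := by simpa using hu2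
          subst hba
          exact Finset.mem_image.mpr ⟨j, (hmemt _ j).mpr hD, rfl⟩
        · intro hu
          obtain ⟨j', hj', heq⟩ := Finset.mem_image.mp hu
          obtain ⟨hab, hjj⟩ : a = b ∧ j' = j := by
            simpa only [Sum.inr.injEq, Prod.mk.injEq] using heq
          subst hab; subst hjj
          exact Finset.mem_filter.mpr
            ⟨Finset.mem_filter.mpr ⟨(hmemt _ _).mp hj', by simp⟩, by simp⟩
    rw [hfib, Finset.card_image_of_injective]
    intro x y hxy
    simpa using hxy
  have hsplit : (D'.filter (fun u => u.isLeft)).card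
      + (D'.filter (fun u => ¬ u.isLeft)).card = D'.card :=
    Finset.card_filter_add_card_filter_not (p := fun u : α ⊕ α × Fin 4 => u.isLeft)
  have hsum : 2 * n + B1.card + 2 * B2.card ≤ ∑ a : α, (t a).card := by
    have heq : ∑ a : α, (2 + (if a ∈ B1 then 1 else 0) + (if a ∈ B2 then 2 else 0))
        = 2 * n + B1.card + 2 * B2.card := by
      rw [Finset.sum_add_distrib, Finset.sum_add_distrib]
      congr 1
      · congr 1
        · simp [hn, Finset.card_univ, mul_comm]
        · rw [Finset.sum_ite_mem, Finset.univ_inter, Finset.sum_const, smul_eq_mul, mul_one]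
      · rw [Finset.sum_ite_mem, Finset.univ_inter, Finset.sum_const, smul_eq_mul, mul_comm]
    rw [← heq]
    exact Finset.sum_le_sum fun a _ => hta a
  have htotal : P.card + 2 * B1.card + 2 * B2.card + 2 * n ≤ D'.card := by
    have h1 : A.card + (2 * n + B1.card + 2 * B2.card) ≤ D'.card := by
      rw [← hsplit, hLcard, hRcard]
      omega
    omega
  -- build D
  obtain ⟨D, fD, hPD, hSD, m1, m2, m3, m4, hDcard⟩ :=
    buildD H ((S \ P).card) P S g le_rfl hgP hgg hgne hgadj
  refine ⟨D, ⟨?_, fD, m1, m2, m3, m4⟩, ?_⟩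
  · intro v
    obtain ⟨s, hsS, hcase⟩ := hdomS v
    rcases hSD s hsS with hsD | hall
    · exact ⟨s, hsD, hcase⟩
    · rcases hcase with rfl | hadj
      · obtain ⟨u, hu⟩ := hiso s
        exact ⟨u, hall u hu, Or.inr hu⟩
      · exact ⟨v, hall v hadj.symm, Or.inl rfl⟩
  · omega
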